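/- Let σ be the substitution on {1,2,3} defined by σ(1)=12, σ(2)=312, σ(3)=3312, and let x be its fixed point, beginning 1231233121231233123312123121231233121231231233⋯. Then the set of return words over the factor 23 in x contains the four distinct words 231, 2331, 23121, 233121; in particular the number of return words over 23 is strictly greater than 3. -/

import Mathlib

set_option maxRecDepth 40000

/-- `w` occurs in the infinite word `U` at position `i`. -/
def OccursAt {A : Type*} (U : ℕ → A) (w : List A) (i : ℕ) : Prop :=
  ∀ j : Fin w.length, U (i + j) = w.get j

/-- `w` is a factor of the infinite word `U`. -/
def IsFactor {A : Type*} (U : ℕ → A) (w : List A) : Prop := ∃ i, OccursAt U w i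

/-- `U` is recurrent: every factor occurs infinitely often. -/
def Recurrent {A : Type*} (U : ℕ → A) : Prop :=
  ∀ w, IsFactor U w → ∀ N, ∃ i, N ≤ i ∧ OccursAt U w i

/-- The set of return words over `w` in `U`: words starting at an occurrence of `w`
and ending just before the next occurrence. -/
def ReturnWords {A : Type*} (U : ℕ → A) (w : List A) : Set (List A) :=
  {r | ∃ i j, OccursAt U w i ∧ OccursAt U w j ∧ i < j ∧
      (∀ t, i < t → t < j → ¬ OccursAt U w t) ∧
      r = List.ofFn (fun t : Fin (j - i) => U (i + t))}

/-- The complexity function: number of distinct factors of length `n`. -/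
noncomputable def Complexity {A : Type*} (U : ℕ → A) (n : ℕ) : ℕ :=
  Set.ncard {w : List A | w.length = n ∧ IsFactor U w}

/-- The recoded Chacon substitution: `σ(1)=12, σ(2)=312, σ(3)=3312`. -/
def chacon : ℕ → List ℕ := fun a =>
  if a = 1 then [1, 2] else if a = 2 then [3, 1, 2] else if a = 3 then [3, 3, 1, 2] else []

/-! ### Auxiliary material -/

/-- Iterates of the substitution starting from `[1]`. -/
def chIter (k : ℕ) : List ℕ := (fun l => l.flatMap chacon)^[k] [1]

lemma chIter_succ (k : ℕ) : chIter (k + 1) = (chIter k).flatMap chacon :=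
  Function.iterate_succ_apply' _ _ _

lemma good_chacon {a : ℕ} (h : a = 1 ∨ a = 2 ∨ a = 3) :
    ∀ b ∈ chacon a, b = 1 ∨ b = 2 ∨ b = 3 := by
  rcases h with h | h | h <;> subst h <;> decide

lemma good_flatMap {l : List ℕ} (h : ∀ a ∈ l, a = 1 ∨ a = 2 ∨ a = 3) :
    ∀ b ∈ l.flatMap chacon, b = 1 ∨ b = 2 ∨ b = 3 := by
  intro b hb
  rw [List.mem_flatMap] at hb
  obtain ⟨a, ha, hb⟩ := hb
  exact good_chacon (h a ha) b hb

lemma good_chIter (k : ℕ) : ∀ a ∈ chIter k, a = 1 ∨ a = 2 ∨ a = 3 := by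
  induction k with
  | zero => decide
  | succ k ih => rw [chIter_succ]; exact good_flatMap ih

lemma two_le_length_chacon {a : ℕ} (h : a = 1 ∨ a = 2 ∨ a = 3) :
    2 ≤ (chacon a).length := by
  rcases h with h | h | h <;> subst h <;> decide

lemma length_flatMap_ge (l : List ℕ) (h : ∀ a ∈ l, a = 1 ∨ a = 2 ∨ a = 3) :
    2 * l.length ≤ (l.flatMap chacon).length := by
  induction l with
  | nil => simp
  | cons a l ih =>
    have h1 := two_le_length_chacon (h a (by simp))
    have h2 := ih (fun b hb => h b (by simp [hb]))
    simp only [List.flatMap_cons, List.length_append, List.length_cons]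
    omega

lemma chIter_len (k : ℕ) : k < (chIter k).length := by
  induction k with
  | zero => decide
  | succ k ih =>
    rw [chIter_succ]
    have := length_flatMap_ge (chIter k) (good_chIter k)
    omega

lemma prefix_flatMap {l₁ l₂ : List ℕ} (h : l₁ <+: l₂) :
    l₁.flatMap chacon <+: l₂.flatMap chacon := by
  obtain ⟨t, rfl⟩ := h
  exact ⟨t.flatMap chacon, List.flatMap_append.symm⟩

lemma chIter_prefix_succ (k : ℕ) : chIter k <+: chIter (k + 1) := by
  induction k with
  | zero => decide
  | succ k ih =>
    rw [chIter_succ, chIter_succ (k+1)]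
    exact prefix_flatMap ih

lemma chIter_prefix {j k : ℕ} (h : j ≤ k) : chIter j <+: chIter k := by
  induction k with
  | zero => rw [Nat.le_zero] at h; subst h; exact List.prefix_rfl
  | succ k ih =>
    rcases Nat.lt_or_ge j (k+1) with h' | h'
    · exact (ih (by omega)).trans (chIter_prefix_succ k)
    · have : j = k + 1 := by omega
      subst this; exact List.prefix_rfl

lemma prefix_of_prefix_length_le' {l₁ l₂ l₃ : List ℕ} (h1 : l₁ <+: l₃) (h2 : l₂ <+: l₃)
    (h : l₁.length ≤ l₂.length) : l₁ <+: l₂ := by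
  rcases List.prefix_or_prefix_of_prefix h1 h2 with h' | h'
  · exact h'
  · rw [h'.eq_of_length_le h]

/-- A prefix of `A ++ B` of length at most `A.length` is a prefix of `A`. -/
lemma prefix_of_prefix_append {L A B : List ℕ} (h : L <+: A ++ B)
    (hlen : L.length ≤ A.length) : L <+: A := by
  obtain ⟨t, ht⟩ := h
  have h1 : L = (A ++ B).take L.length := by
    rw [← ht, List.take_append, Nat.sub_self, List.take_zero,
      List.append_nil, List.take_length]
  rw [h1, List.take_append, Nat.sub_eq_zero_of_le hlen, List.take_zero,
    List.append_nil]
  exact List.take_prefix _ _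

section FixedPoint

variable (x : ℕ → ℕ) (hx0 : x 0 = 1)
  (hfix : ∀ N : ℕ,
      (List.ofFn fun i : Fin N => x i) <+:
        (List.ofFn fun i : Fin N => x i).flatMap chacon)

include hx0 hfix

lemma L_prefix : ∀ k N, N ≤ (chIter k).length →
    (List.ofFn fun i : Fin N => x i) <+: chIter k := by
  intro k N
  induction N with
  | zero => intro _; simp
  | succ N ih =>
    intro hN
    have ihN := ih (by omega)
    rcases Nat.eq_zero_or_pos N with h0 | hpos
    · subst h0
      have h1 : (List.ofFn fun i : Fin 1 => x i) = [1] := by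
        simp [List.ofFn_succ, hx0]
      rw [h1]
      have := chIter_prefix (Nat.zero_le k)
      simpa [chIter] using this
    · -- N ≥ 1
      have hgood : ∀ a ∈ (List.ofFn fun i : Fin N => x i), a = 1 ∨ a = 2 ∨ a = 3 := by
        intro a ha
        exact good_chIter k a (ihN.subset ha)
      have hlen : 2 * N ≤ ((List.ofFn fun i : Fin N => x i).flatMap chacon).length := by
        simpa using length_flatMap_ge _ hgood
      have hsplit : (List.ofFn fun i : Fin (N+1) => x i) =
          (List.ofFn fun i : Fin N => x i) ++ [x N] := by
        rw [List.ofFn_succ']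
        simp [List.concat_eq_append]
      have hfx := hfix (N + 1)
      rw [hsplit, List.flatMap_append] at hfx
      have hpref1 : (List.ofFn fun i : Fin N => x i) ++ [x N] <+:
          (List.ofFn fun i : Fin N => x i).flatMap chacon := by
        refine prefix_of_prefix_append hfx ?_
        simp only [List.length_append, List.length_ofFn, List.length_singleton]
        omega
      have hpref2 : (List.ofFn fun i : Fin N => x i) ++ [x N] <+: chIter (k+1) :=
        hpref1.trans ((prefix_flatMap ihN).trans (by rw [← chIter_succ]))
      rw [← hsplit] at hpref2
      refine prefix_of_prefix_length_le' hpref2 (chIter_prefix_succ k) ?_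
      simpa using hN

lemma x_eq {n k : ℕ} (hk : n < (chIter k).length) : x n = (chIter k).getD n 0 := by
  have h := L_prefix x hx0 hfix k (n+1) hk
  have h1 : (List.ofFn fun i : Fin (n+1) => x i)[n]'(by simp) = x n := by
    rw [List.getElem_ofFn]
  rw [← h1, h.getElem (by simp), List.getD_eq_getElem _ _ hk]

lemma x_good (n : ℕ) : x n = 1 ∨ x n = 2 ∨ x n = 3 := by
  have h := chIter_len (n+1)
  have hn : n < (chIter (n+1)).length := by omega
  rw [x_eq x hx0 hfix hn, List.getD_eq_getElem _ _ hn]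
  exact good_chIter (n+1) _ (List.getElem_mem _)

end FixedPoint

/-- Within the image of a nice list, `23` occurs in every window of length `9`. -/
lemma window_lemma (l : List ℕ) :
    ∀ n, (∀ a ∈ l, a = 1 ∨ a = 2 ∨ a = 3) →
      l.Chain' (fun a b => ¬(a = 1 ∧ b = 1)) →
      n + 9 ≤ (l.flatMap chacon).length →
      ∃ t, n ≤ t ∧ t ≤ n + 7 ∧ (l.flatMap chacon).getD t 0 = 2 ∧
        (l.flatMap chacon).getD (t+1) 0 = 3 := by
  induction l with
  | nil => intro n _ _ hn; simp at hn
  | cons a l ih =>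
    intro n hgood h11 hn
    have ha := hgood a (by simp)
    rcases Nat.lt_or_ge n (chacon a).length with hcase | hcase
    · -- n inside first block
      cases l with
      | nil =>
        exfalso
        rcases ha with h | h | h <;> subst h <;> simp [chacon] at hn <;> omega
      | cons b l' =>
        have hb := hgood b (by simp)
        have hab : ¬(a = 1 ∧ b = 1) := (List.isChain_cons_cons.mp h11).1
        rcases hb with hb | hb | hb
        · -- b = 1, so a ≠ 1; need a third letter c with c ≠ 1
          subst hb
          have ha' : a = 2 ∨ a = 3 := by
            rcases ha with h | h | h
            · exact absurd ⟨h, rfl⟩ hab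
            · exact Or.inl h
            · exact Or.inr h
          cases l' with
          | nil =>
            exfalso
            rcases ha' with h | h <;> subst h <;> simp [chacon] at hn <;> omega
          | cons c l'' =>
            have hc := hgood c (by simp)
            have hbc : ¬((1:ℕ) = 1 ∧ c = 1) :=
              (List.isChain_cons_cons.mp (List.isChain_cons_cons.mp h11).2).1
            have hc' : c = 2 ∨ c = 3 := by
              rcases hc with h | h | h
              · exact absurd ⟨rfl, h⟩ hbc
              · exact Or.inl h
              · exact Or.inr h
            refine ⟨(chacon a).length + 1, ?_, ?_, ?_, ?_⟩
            · rcases ha' with h | h <;> subst h <;> simp [chacon] at hcase ⊢ <;> omega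
            · rcases ha' with h | h <;> subst h <;> simp [chacon] <;> omega
            · rcases ha' with h | h <;> rcases hc' with h' | h' <;> subst h <;> subst h' <;>
                simp [chacon]
            · rcases ha' with h | h <;> rcases hc' with h' | h' <;> subst h <;> subst h' <;>
                simp [chacon]
        · -- b = 2
          subst hb
          refine ⟨(chacon a).length - 1, ?_, ?_, ?_, ?_⟩
          · rcases ha with h | h | h <;> subst h <;> simp [chacon] at hcase ⊢ <;> omega
          · rcases ha with h | h | h <;> subst h <;> simp [chacon] <;> omega
          · rcases ha with h | h | h <;> subst h <;> simp [chacon]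
          · rcases ha with h | h | h <;> subst h <;> simp [chacon]
        · -- b = 3
          subst hb
          refine ⟨(chacon a).length - 1, ?_, ?_, ?_, ?_⟩
          · rcases ha with h | h | h <;> subst h <;> simp [chacon] at hcase ⊢ <;> omega
          · rcases ha with h | h | h <;> subst h <;> simp [chacon] <;> omega
          · rcases ha with h | h | h <;> subst h <;> simp [chacon]
          · rcases ha with h | h | h <;> subst h <;> simp [chacon]
    · -- shift into the tail
      have hgood' : ∀ b ∈ l, b = 1 ∨ b = 2 ∨ b = 3 := fun b hb => hgood b (by simp [hb])
      have hlen : (n - (chacon a).length) + 9 ≤ (l.flatMap chacon).length := by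
        have : ((a :: l).flatMap chacon).length
            = (chacon a).length + (l.flatMap chacon).length := by
          simp [List.flatMap_cons]
        omega
      obtain ⟨t, ht1, ht2, ht3, ht4⟩ := ih (n - (chacon a).length) hgood' h11.tail hlen
      refine ⟨t + (chacon a).length, by omega, by omega, ?_, ?_⟩
      · rw [List.flatMap_cons, List.getD_append_right _ _ _ _ (by omega)]
        rwa [show t + (chacon a).length - (chacon a).length = t by omega]
      · rw [List.flatMap_cons, List.getD_append_right _ _ _ _ (by omega)]
        rwa [show t + (chacon a).length + 1 - (chacon a).length = t + 1 by omega]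

lemma chain_chacon {a : ℕ} (h : a = 1 ∨ a = 2 ∨ a = 3) :
    (chacon a).Chain' (fun a b => ¬(a = 1 ∧ b = 1)) := by
  rcases h with h | h | h <;> subst h <;> simp [chacon, List.Chain']

lemma getLast_chacon {a : ℕ} (h : a = 1 ∨ a = 2 ∨ a = 3) :
    (chacon a).getLast? = some 2 := by
  rcases h with h | h | h <;> subst h <;> simp [chacon]

lemma chain_flatMap (l : List ℕ) (hgood : ∀ a ∈ l, a = 1 ∨ a = 2 ∨ a = 3) :
    (l.flatMap chacon).Chain' (fun a b => ¬(a = 1 ∧ b = 1)) := by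
  induction l with
  | nil => simp [List.Chain']
  | cons a l ih =>
    unfold List.Chain'
    rw [List.flatMap_cons, List.isChain_append]
    refine ⟨chain_chacon (hgood a (by simp)), ih (fun b hb => hgood b (by simp [hb])), ?_⟩
    intro u hu v _
    rw [getLast_chacon (hgood a (by simp))] at hu
    simp only [Option.mem_def, Option.some.injEq] at hu
    subst hu
    simp

lemma chain_chIter (k : ℕ) : (chIter k).Chain' (fun a b => ¬(a = 1 ∧ b = 1)) := by
  cases k with
  | zero => exact List.isChain_singleton _
  | succ k => rw [chIter_succ]; exact chain_flatMap _ (good_chIter k)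

section FixedPoint2

variable (x : ℕ → ℕ) (hx0 : x 0 = 1)
  (hfix : ∀ N : ℕ,
      (List.ofFn fun i : Fin N => x i) <+:
        (List.ofFn fun i : Fin N => x i).flatMap chacon)

include hx0 hfix

/-- `23` occurs in `x` in every window of length `9`. -/
lemma x_window (n : ℕ) : ∃ t, n ≤ t ∧ t ≤ n + 7 ∧ x t = 2 ∧ x (t+1) = 3 := by
  set m := n + 9 with hm
  have hlen1 : m < (chIter m).length := chIter_len m
  have hlen2 : (chIter m).length ≤ (chIter (m+1)).length :=
    (chIter_prefix_succ m).length_le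
  have hn : n + 9 ≤ ((chIter m).flatMap chacon).length := by
    rw [← chIter_succ]; omega
  obtain ⟨t, ht1, ht2, ht3, ht4⟩ :=
    window_lemma (chIter m) n (good_chIter m) (chain_chIter m) hn
  rw [← chIter_succ] at ht3 ht4
  refine ⟨t, ht1, ht2, ?_, ?_⟩
  · rw [x_eq x hx0 hfix (show t < (chIter (m+1)).length by omega)]; exact ht3
  · rw [x_eq x hx0 hfix (show t + 1 < (chIter (m+1)).length by omega)]; exact ht4

lemma occursAt_iff (i : ℕ) : OccursAt x [2, 3] i ↔ x i = 2 ∧ x (i+1) = 3 := by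
  constructor
  · intro h
    have h0 := h ⟨0, by norm_num⟩
    have h1 := h ⟨1, by norm_num⟩
    simp at h0 h1
    exact ⟨h0, h1⟩
  · rintro ⟨h1, h2⟩ j
    fin_cases j <;> simpa

lemma rw_subset : ReturnWords x [2, 3] ⊆ {l : List ℕ | l.length ≤ 8 ∧ ∀ a ∈ l, a < 4} := by
  rintro r ⟨i, j, hi, hj, hij, hmin, rfl⟩
  obtain ⟨t, ht1, ht2, ht3, ht4⟩ := x_window x hx0 hfix (i + 1)
  have htocc : OccursAt x [2, 3] t := (occursAt_iff x hx0 hfix t).mpr ⟨ht3, ht4⟩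
  have hjt : j ≤ t := by
    by_contra h
    exact hmin t (by omega) (by omega) htocc
  constructor
  · simp only [List.length_ofFn]
    omega
  · intro a ha
    rw [List.mem_ofFn] at ha
    obtain ⟨u, rfl⟩ := ha
    show x (i + ↑u) < 4
    rcases x_good x hx0 hfix (i + u) with h | h | h <;> omega

end FixedPoint2

lemma finite_target : Set.Finite {l : List ℕ | l.length ≤ 8 ∧ ∀ a ∈ l, a < 4} := by
  have hfin : Set.Finite {l : List (Fin 4) | l.length ≤ 8} := List.finite_length_le (Fin 4) 8
  have himg := hfin.image (List.map (Fin.val))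
  refine himg.subset ?_
  rintro l ⟨hlen, hmem⟩
  refine ⟨l.pmap (fun a h => (⟨a, h⟩ : Fin 4)) hmem, ?_, ?_⟩
  · simp [List.length_pmap, hlen]
  · rw [List.map_pmap]
    exact List.pmap_eq_map (f := id) hmem ▸ List.map_id l

/-- for the fixed point `x` of the recoded Chacon substitution
(characterized by `x 0 = 1` and every prefix of `x` being a prefix of its image
under the substitution), the four words `231, 2331, 23121, 233121` are return
words over `23`; in particular there are more than `3` return words over `23`. -/
theorem chacon_fixed_point_more_than_three_return_words
    (x : ℕ → ℕ) (hx0 : x 0 = 1)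
    (hfix : ∀ N : ℕ,
      (List.ofFn fun i : Fin N => x i) <+:
        (List.ofFn fun i : Fin N => x i).flatMap chacon) :
    {[2, 3, 1], [2, 3, 3, 1], [2, 3, 1, 2, 1], [2, 3, 3, 1, 2, 1]}
        ⊆ ReturnWords x [2, 3] ∧
      3 < (ReturnWords x [2, 3]).ncard := by
  -- values of x on the first 30 positions
  have hval : ∀ n, n < 30 →
      x n = [1,2,3,1,2,3,3,1,2,1,2,3,1,2,3,3,1,2,3,3,1,2,1,2,3,1,2,1,2,3].getD n 0 := by
    intro n hn
    have h5 : (29:ℕ) < (chIter 5).length := by decide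
    have hn5 : n < (chIter 5).length := by omega
    have htake : (chIter 5).take 30 =
        [1,2,3,1,2,3,3,1,2,1,2,3,1,2,3,3,1,2,3,3,1,2,1,2,3,1,2,1,2,3] := by decide
    have h1 : ((chIter 5).take 30).getD n 0 = (chIter 5).getD n 0 := by
      rw [List.getD_eq_getElem _ _ (by rw [List.length_take]; omega),
        List.getD_eq_getElem _ _ hn5, List.getElem_take]
    rw [x_eq x hx0 hfix hn5, ← h1, htake]
  have hocc : ∀ i, i + 1 < 30 → (OccursAt x [2, 3] i ↔
      ([1,2,3,1,2,3,3,1,2,1,2,3,1,2,3,3,1,2,3,3,1,2,1,2,3,1,2,1,2,3].getD i 0 = 2 ∧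
       [1,2,3,1,2,3,3,1,2,1,2,3,1,2,3,3,1,2,3,3,1,2,1,2,3,1,2,1,2,3].getD (i+1) 0 = 3)) := by
    intro i hi
    rw [occursAt_iff x hx0 hfix, hval i (by omega), hval (i+1) (by omega)]
  have hsub : {[2, 3, 1], [2, 3, 3, 1], [2, 3, 1, 2, 1], [2, 3, 3, 1, 2, 1]}
      ⊆ ReturnWords x [2, 3] := by
    intro r hr
    simp only [Set.mem_insert_iff, Set.mem_singleton_iff] at hr
    rcases hr with rfl | rfl | rfl | rfl
    · -- [2,3,1] : i = 1, j = 4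
      refine ⟨1, 4, ?_, ?_, by omega, ?_, ?_⟩
      · rw [hocc 1 (by omega)]; decide
      · rw [hocc 4 (by omega)]; decide
      · intro t ht1 ht2
        rw [hocc t (by omega)]
        interval_cases t <;> decide
      · have e1 : x 1 = 2 := by rw [hval 1 (by omega)]; decide
        have e2 : x 2 = 3 := by rw [hval 2 (by omega)]; decide
        have e3 : x 3 = 1 := by rw [hval 3 (by omega)]; decide
        show _ = List.ofFn (fun t : Fin (4-1) => x (1 + t))
        simp [List.ofFn_succ, e1, e2, e3]
    · -- [2,3,3,1] : i = 13, j = 17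
      refine ⟨13, 17, ?_, ?_, by omega, ?_, ?_⟩
      · rw [hocc 13 (by omega)]; decide
      · rw [hocc 17 (by omega)]; decide
      · intro t ht1 ht2
        rw [hocc t (by omega)]
        interval_cases t <;> decide
      · have e13 : x 13 = 2 := by rw [hval 13 (by omega)]; decide
        have e14 : x 14 = 3 := by rw [hval 14 (by omega)]; decide
        have e15 : x 15 = 3 := by rw [hval 15 (by omega)]; decide
        have e16 : x 16 = 1 := by rw [hval 16 (by omega)]; decide
        show _ = List.ofFn (fun t : Fin (17-13) => x (13 + t))
        simp [List.ofFn_succ, e13, e14, e15, e16]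
    · -- [2,3,1,2,1] : i = 23, j = 28
      refine ⟨23, 28, ?_, ?_, by omega, ?_, ?_⟩
      · rw [hocc 23 (by omega)]; decide
      · rw [hocc 28 (by omega)]; decide
      · intro t ht1 ht2
        rw [hocc t (by omega)]
        interval_cases t <;> decide
      · have e23 : x 23 = 2 := by rw [hval 23 (by omega)]; decide
        have e24 : x 24 = 3 := by rw [hval 24 (by omega)]; decide
        have e25 : x 25 = 1 := by rw [hval 25 (by omega)]; decide
        have e26 : x 26 = 2 := by rw [hval 26 (by omega)]; decide
        have e27 : x 27 = 1 := by rw [hval 27 (by omega)]; decide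
        show _ = List.ofFn (fun t : Fin (28-23) => x (23 + t))
        simp [List.ofFn_succ, e23, e24, e25, e26, e27]
    · -- [2,3,3,1,2,1] : i = 4, j = 10
      refine ⟨4, 10, ?_, ?_, by omega, ?_, ?_⟩
      · rw [hocc 4 (by omega)]; decide
      · rw [hocc 10 (by omega)]; decide
      · intro t ht1 ht2
        rw [hocc t (by omega)]
        interval_cases t <;> decide
      · have e4 : x 4 = 2 := by rw [hval 4 (by omega)]; decide
        have e5 : x 5 = 3 := by rw [hval 5 (by omega)]; decide
        have e6 : x 6 = 3 := by rw [hval 6 (by omega)]; decide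
        have e7 : x 7 = 1 := by rw [hval 7 (by omega)]; decide
        have e8 : x 8 = 2 := by rw [hval 8 (by omega)]; decide
        have e9 : x 9 = 1 := by rw [hval 9 (by omega)]; decide
        show _ = List.ofFn (fun t : Fin (10-4) => x (4 + t))
        simp [List.ofFn_succ, e4, e5, e6, e7, e8, e9]
  refine ⟨hsub, ?_⟩
  have hfin : (ReturnWords x [2,3]).Finite :=
    finite_target.subset (rw_subset x hx0 hfix)
  have hcard4 : ({[2, 3, 1], [2, 3, 3, 1], [2, 3, 1, 2, 1], [2, 3, 3, 1, 2, 1]} :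
      Set (List ℕ)).ncard = 4 := by
    rw [show ({[2, 3, 1], [2, 3, 3, 1], [2, 3, 1, 2, 1], [2, 3, 3, 1, 2, 1]} : Set (List ℕ)) =
      (↑({[2, 3, 1], [2, 3, 3, 1], [2, 3, 1, 2, 1], [2, 3, 3, 1, 2, 1]} : Finset (List ℕ)))
      by simp]
    rw [Set.ncard_coe_finset]
    decide
  have := Set.ncard_le_ncard hsub hfin
  omega
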